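/- For all a in the K-NilHecke ring and φ, ψ in Ψ, the pairing satisfies ⟨a, φψ⟩ = ⟨Δ(a), φ⊗ψ⟩; consequently, if Δ(T_w) = Σ_{u,v} c_w^{uv} T_u ⊗ T_v then ψ^u ψ^v = Σ_w c_w^{uv} ψ^w, i.e. the coproduct structure constants of the nilHecke ring equal the product structure constants of the Schubert basis ψ^v. -/

import Mathlib

/-!
STATEMENT 12: For all `a` in the K-NilHecke ring `𝕂` and `φ, χ ∈ Ψ`, the
pairing satisfies `⟨a, φχ⟩ = ⟨Δ(a), φ ⊗ χ⟩`; consequently, if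
`Δ(T_w) = Σ_{u,v} c_w^{uv} T_u ⊗ T_v` then `ψ^u ψ^v = Σ_w c_w^{uv} ψ^w`,
i.e. the coproduct structure constants of the nilHecke ring are the product
structure constants of the Schubert basis `{ψ^v}`.

Setup as in the K-NilHecke framework (`F = Q(T)`, `R = R(T) ⊆ F`,
`T_i = (1-e^{α_i})⁻¹(r_i-1)`, `T_w`, the evaluation pairing `Pair`, and the
Schubert functions `ψ^v` with `⟨T_u, ψ^v⟩ = δ_{v,u}`).  `𝕂` consists of the
finite `R(T)`-linear combinations of the `T_w` (the set `Kset`).  The pairing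
`⟨·,·⟩ : (𝕂 ⊗_{R(T)} 𝕂) × (Ψ ⊗_{R(T)} Ψ) → R(T)` with
`⟨x ⊗ y, φ ⊗ χ⟩ = ⟨x,φ⟩⟨y,χ⟩` is encoded by the functional
`DP a φ χ = ⟨Δ(a), φ ⊗ χ⟩`, which is additive and left `Q(T)`-linear in `a`
and satisfies `⟨Δ(w), φ ⊗ χ⟩ = φ(w) χ(w)` (as `Δ(w) = w ⊗ w`); the expansion
`Δ(T_w) = Σ_{u,v} c_w^{uv} T_u ⊗ T_v` is encoded by the hypothesis `hc`.
Products of functions `W → F` are pointwise, and `Σᶠ` denotes a finite sum.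
-/
open scoped Classical

noncomputable section

/-- Left multiplication by `q : F` as an additive endomorphism of `F`. -/
def mulOp {F : Type*} [Field F] (q : F) : Module.End ℤ F :=
  (AddMonoidHom.mulLeft q).toIntLinearMap

/-- The action of a group element `w : W` on `F` as an additive endomorphism. -/
def grpOp {W F : Type*} [Field F] [Group W] [MulSemiringAction W F] (w : W) :
    Module.End ℤ F :=
  (DistribMulAction.toAddMonoidHom F w).toIntLinearMap

/-- The Demazure element `T = (1 - a)⁻¹ (w - 1)` (with `a = e^{α_i}`,
`w = r_i`) as an operator on `F`. -/
def TOp {W F : Type*} [Field F] [Group W] [MulSemiringAction W F]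
    (a : F) (w : W) : Module.End ℤ F :=
  mulOp (1 - a)⁻¹ * (grpOp w - 1)

/-- `T_ω = T_{i_1} ⋯ T_{i_N}` for a word `ω = (i_1, …, i_N)`. -/
def Tword {B W F : Type*} [Field F] [Group W] [MulSemiringAction W F]
    {M : CoxeterMatrix B} (cs : CoxeterSystem M W) (a : B → F) (ω : List B) :
    Module.End ℤ F :=
  (ω.map (fun i => TOp (a i) (cs.simple i))).prod

/-- `𝕂 = ⊕_{w} R(T) T_w`: finite `R`-linear combinations of the `T_w`. -/
def Kset {W F : Type*} [Field F] (R : Subring F)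
    (Tw : W → Module.End ℤ F) : Set (Module.End ℤ F) :=
  {x | ∃ d : W →₀ F, (∀ w, d w ∈ R) ∧
    x = ∑ w ∈ d.support, mulOp (d w) * Tw w}

section Aux
variable {B W F : Type*} [Field F] [Group W] [MulSemiringAction W F]
@[simp] lemma mulOp_apply (q x : F) : mulOp q x = q * x := rfl
@[simp] lemma grpOp_apply (w : W) (x : F) : grpOp w x = w • x := rfl
lemma mulOp_zero : mulOp (0 : F) = 0 := by ext x; simp
lemma mulOp_one : mulOp (1 : F) = 1 := by ext x; simp
lemma mulOp_add (p q : F) : mulOp (p + q) = mulOp p + mulOp q := by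
  ext x; simp [add_mul]
lemma mulOp_mulOp (p q : F) : mulOp p * mulOp q = mulOp (p * q) := by
  ext x; simp [Module.End.mul_apply, mul_assoc]
lemma grpOp_one : grpOp (1 : W) = (1 : Module.End ℤ F) := by ext x; simp
lemma grpOp_mul (w w' : W) : grpOp (w * w') = (grpOp w * grpOp w' : Module.End ℤ F) := by
  ext x; simp [Module.End.mul_apply, mul_smul]
lemma TOp_apply (a : F) (t : W) (x : F) : TOp a t x = (1 - a)⁻¹ * (t • x - x) := by
  simp [TOp, Module.End.mul_apply]

/-- `TOp` moved past a single `mulOp q * grpOp g` generator. -/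
lemma TOp_mul_grp_gen (a q : F) (t g : W) :
    TOp a t * (mulOp q * grpOp g) =
      mulOp ((1 - a)⁻¹ * (t • q)) * grpOp (t * g) + mulOp (-((1 - a)⁻¹ * q)) * grpOp g := by
  ext x
  simp only [Module.End.mul_apply, LinearMap.add_apply, mulOp_apply, grpOp_apply, TOp_apply]
  rw [smul_mul', mul_smul]
  ring

/-- `TOp` moved past a scalar: `T ∘ m_q = m_{t•q} ∘ T + m_{(1-a)⁻¹ (t•q - q)}`. -/
lemma TOp_mul_mulOp (a q : F) (t : W) :
    TOp a t * mulOp q =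
      mulOp (t • q) * TOp a t + mulOp ((1 - a)⁻¹ * (t • q - q)) := by
  ext x
  simp only [Module.End.mul_apply, LinearMap.add_apply, mulOp_apply, TOp_apply]
  rw [smul_mul']
  ring

/-- `T² = μ T` when `t² = 1`. -/
lemma TOp_sq (a : F) (t : W) (ht : t * t = 1) :
    TOp a t * TOp a t = mulOp (-(t • (1 - a)⁻¹ + (1 - a)⁻¹)) * TOp a t := by
  ext x
  simp only [Module.End.mul_apply, mulOp_apply, TOp_apply]
  rw [smul_mul', smul_sub, smul_smul, ht, one_smul]
  ring

lemma grpOp_eq_TOp (a : F) (t : W) (ha : a ≠ 1) :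
    grpOp t = mulOp (1 - a) * TOp a t + (1 : Module.End ℤ F) := by
  have h : (1 - a) ≠ 0 := sub_ne_zero.mpr (Ne.symm ha)
  ext x
  simp only [LinearMap.add_apply, Module.End.mul_apply, Module.End.one_apply, mulOp_apply,
    grpOp_apply, TOp_apply]
  field_simp
  ring

/-- Finite `F`-linear span of a family of operators. -/
def SpanOf {W F : Type*} [Field F] (Tf : W → Module.End ℤ F) : Set (Module.End ℤ F) :=
  {z | ∃ (t : Finset W) (q : W → F), z = ∑ w ∈ t, mulOp (q w) * Tf w}

variable {Tf Tg : W → Module.End ℤ F}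

lemma single_mem_spanOf (q : F) (w : W) : mulOp q * Tf w ∈ SpanOf Tf :=
  ⟨{w}, fun _ => q, by simp⟩

lemma mem_spanOf (w : W) : Tf w ∈ SpanOf Tf := by
  have := single_mem_spanOf (Tf := Tf) 1 w
  rwa [mulOp_one, one_mul] at this

lemma zero_mem_spanOf : (0 : Module.End ℤ F) ∈ SpanOf Tf :=
  ⟨∅, fun _ => 0, by simp⟩

lemma add_mem_spanOf {z z' : Module.End ℤ F} (hz : z ∈ SpanOf Tf) (hz' : z' ∈ SpanOf Tf) :
    z + z' ∈ SpanOf Tf := by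
  obtain ⟨s, q, rfl⟩ := hz
  obtain ⟨s', q', rfl⟩ := hz'
  refine ⟨s ∪ s', fun w => (if w ∈ s then q w else 0) + (if w ∈ s' then q' w else 0), ?_⟩
  have e1 : ∀ (s₀ : Finset W) (q₀ : W → F), s₀ ⊆ s ∪ s' →
      (∑ w ∈ s ∪ s', mulOp (if w ∈ s₀ then q₀ w else 0) * Tf w)
        = ∑ w ∈ s₀, mulOp (q₀ w) * Tf w := by
    intro s₀ q₀ hsub
    rw [← Finset.sum_subset hsub (fun w _ hw => by rw [if_neg hw, mulOp_zero, zero_mul])]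
    exact Finset.sum_congr rfl fun w hw => by rw [if_pos hw]
  rw [← e1 s q Finset.subset_union_left, ← e1 s' q' Finset.subset_union_right,
    ← Finset.sum_add_distrib]
  exact Finset.sum_congr rfl fun w _ => by rw [mulOp_add, add_mul]

lemma sum_mem_spanOf {ι : Type*} (s : Finset ι) (f : ι → Module.End ℤ F)
    (h : ∀ i ∈ s, f i ∈ SpanOf Tf) : (∑ i ∈ s, f i) ∈ SpanOf Tf := by
  classical
  induction s using Finset.induction_on with
  | empty => simpa using zero_mem_spanOf
  | insert _ _ hns ih =>
    rename_i i s0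
    rw [Finset.sum_insert hns]
    exact add_mem_spanOf (h i (Finset.mem_insert_self i s0))
      (ih fun j hj => h j (Finset.mem_insert_of_mem hj))

lemma mulOp_mul_mem_spanOf (p : F) {z : Module.End ℤ F} (hz : z ∈ SpanOf Tf) :
    mulOp p * z ∈ SpanOf Tf := by
  obtain ⟨s, q, rfl⟩ := hz
  rw [Finset.mul_sum]
  refine ⟨s, fun w => p * q w, Finset.sum_congr rfl fun w _ => ?_⟩
  rw [← mul_assoc, mulOp_mulOp]

lemma mul_mem_spanOf_of_gen {A : Module.End ℤ F}
    (h : ∀ (q : F) (w : W), A * (mulOp q * Tf w) ∈ SpanOf Tg)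
    {z : Module.End ℤ F} (hz : z ∈ SpanOf Tf) : A * z ∈ SpanOf Tg := by
  obtain ⟨s, q, rfl⟩ := hz
  rw [Finset.mul_sum]
  exact sum_mem_spanOf s _ fun w _ => h (q w) w

end Aux

theorem pairing_coproduct_and_structure_constants
    {B W F : Type*} [Field F] [Group W] [MulSemiringAction W F]
    {M : CoxeterMatrix B} (cs : CoxeterSystem M W) (a : B → F)
    (R : Subring F)
    (Tw : W → Module.End ℤ F)
    (hTw : ∀ ω : List B, cs.IsReduced ω → Tw (cs.wordProd ω) = Tword cs a ω)
    (Pair : Module.End ℤ F → (W → F) → F)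
    (hPadd : ∀ x y φ, Pair (x + y) φ = Pair x φ + Pair y φ)
    (hPmul : ∀ (q : F) x φ, Pair (mulOp q * x) φ = q * Pair x φ)
    (hPgrp : ∀ (w : W) (φ : W → F), Pair (grpOp w) φ = φ w)
    (ψ : W → W → F)
    (hψ : ∀ v u : W, Pair (Tw u) (ψ v) = if v = u then 1 else 0)
    (hψfin : ∀ x : W, {u : W | ψ u x ≠ 0}.Finite)
    -- `DP a φ χ` encodes `⟨Δ(a), φ ⊗ χ⟩`:
    (DP : Module.End ℤ F → (W → F) → (W → F) → F)
    (hDPadd : ∀ x y φ χ, DP (x + y) φ χ = DP x φ χ + DP y φ χ)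
    (hDPmul : ∀ (q : F) x φ χ, DP (mulOp q * x) φ χ = q * DP x φ χ)
    (hDPgrp : ∀ (w : W) (φ χ : W → F), DP (grpOp w) φ χ = φ w * χ w)
    -- the structure constants `c_w^{uv}`, with `Δ(T_w) = Σ_{u,v} c_w^{uv} T_u ⊗ T_v`:
    (c : W → W → W → F)
    (hcfin : ∀ w : W, {p : W × W | c w p.1 p.2 ≠ 0}.Finite)
    (hc : ∀ (w : W) (φ χ : W → F),
      DP (Tw w) φ χ = ∑ᶠ p : W × W, c w p.1 p.2 * Pair (Tw p.1) φ * Pair (Tw p.2) χ) :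
    -- (i) `⟨a, φ χ⟩ = ⟨Δ(a), φ ⊗ χ⟩` for all `a ∈ 𝕂` and `φ, χ ∈ Ψ`:
    (∀ x ∈ Kset R Tw, ∀ φ χ : W → F,
      (∀ w, Pair (Tw w) φ ∈ R) → (∀ w, Pair (Tw w) χ ∈ R) →
      Pair x (fun w => φ w * χ w) = DP x φ χ) ∧
    -- (ii) `ψ^u ψ^v = Σ_w c_w^{uv} ψ^w`:
    (∀ u v x : W, ψ u x * ψ v x = ∑ᶠ w : W, c w u v * ψ w x) := by
  classical
  by_cases hA : ∀ i : B, a i ≠ 1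
  case neg =>
    push_neg at hA
    obtain ⟨i, hi⟩ := hA
    exfalso
    have hred : cs.IsReduced [i] := by
      simp [CoxeterSystem.IsReduced, CoxeterSystem.wordProd_cons, CoxeterSystem.wordProd_nil,
        cs.length_simple]
    have hTwi : Tw (cs.wordProd [i]) = 0 := by
      rw [hTw [i] hred]
      show Tword cs a [i] = 0
      simp [Tword, TOp, hi, mulOp_zero]
    have hP0 : Pair 0 (ψ (cs.wordProd [i])) = 0 := by
      have h := hPadd 0 0 (ψ (cs.wordProd [i]))
      rw [add_zero] at h
      exact left_eq_add.mp h
    have h2 := hψ (cs.wordProd [i]) (cs.wordProd [i])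
    rw [if_pos rfl, hTwi, hP0] at h2
    exact zero_ne_one h2
  case pos =>
    have hTwordNil : Tword cs a [] = 1 := by simp [Tword]
    have hTwordCons : ∀ (i : B) (ω : List B),
        Tword cs a (i :: ω) = TOp (a i) (cs.simple i) * Tword cs a ω := by
      intro i ω; simp [Tword]
    have hrednil : cs.IsReduced ([] : List B) := by
      simp [CoxeterSystem.IsReduced, CoxeterSystem.wordProd_nil]
    have hTw1 : Tw 1 = 1 := by
      have h := hTw [] hrednil
      rwa [CoxeterSystem.wordProd_nil, hTwordNil] at h
    have hstep : ∀ (i : B) (w : W), cs.length (cs.simple i * w) = cs.length w + 1 →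
        TOp (a i) (cs.simple i) * Tw w = Tw (cs.simple i * w) := by
      intro i w hlen
      obtain ⟨ω, hω, rfl⟩ := cs.exists_reduced_word' w
      have hred2 : cs.IsReduced (i :: ω) := by
        have hω' := hω
        unfold CoxeterSystem.IsReduced at hω' ⊢
        rw [CoxeterSystem.wordProd_cons, hlen, hω']
        simp
      have e := hTw (i :: ω) hred2
      rw [CoxeterSystem.wordProd_cons] at e
      rw [e, hTwordCons, ← hTw ω hω]
    have hTmul : ∀ (i : B) (w : W), ∃ (μ : F) (w' : W),
        TOp (a i) (cs.simple i) * Tw w = mulOp μ * Tw w' := by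
      intro i w
      rcases cs.length_simple_mul w i with h | h
      · exact ⟨1, cs.simple i * w, by rw [mulOp_one, one_mul, hstep i w h]⟩
      · set w' := cs.simple i * w with hw'
        have hw : cs.simple i * w' = w := by
          rw [hw', CoxeterSystem.simple_mul_simple_cancel_left]
        have hlen' : cs.length (cs.simple i * w') = cs.length w' + 1 := by
          rw [hw]; omega
        have e := hstep i w' hlen'
        rw [hw] at e
        refine ⟨-(cs.simple i • (1 - a i)⁻¹ + (1 - a i)⁻¹), w, ?_⟩
        rw [← e, ← mul_assoc, TOp_sq _ _ (cs.simple_mul_simple_self i), mul_assoc, e]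
    have hTgen : ∀ (i : B) (q : F) (w : W),
        TOp (a i) (cs.simple i) * (mulOp q * Tw w) ∈ SpanOf Tw := by
      intro i q w
      rw [← mul_assoc, TOp_mul_mulOp, add_mul, mul_assoc]
      obtain ⟨μ, w', hμ⟩ := hTmul i w
      rw [hμ, ← mul_assoc, mulOp_mulOp]
      exact add_mem_spanOf (single_mem_spanOf _ _) (single_mem_spanOf _ _)
    have hgrpmem : ∀ x : W, grpOp x ∈ SpanOf Tw := by
      intro x
      obtain ⟨ω, -, rfl⟩ := cs.exists_reduced_word' x
      induction ω with
      | nil =>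
        rw [CoxeterSystem.wordProd_nil, grpOp_one, ← hTw1]
        exact mem_spanOf 1
      | cons i ω ih =>
        rw [CoxeterSystem.wordProd_cons, grpOp_mul, grpOp_eq_TOp (a i) _ (hA i), add_mul,
          one_mul]
        refine add_mem_spanOf ?_ ih
        rw [mul_assoc]
        exact mulOp_mul_mem_spanOf _ (mul_mem_spanOf_of_gen (hTgen i) ih)
    have hTwordmem : ∀ ω : List B, Tword cs a ω ∈ SpanOf (grpOp (W := W) (F := F)) := by
      intro ω
      induction ω with
      | nil =>
        rw [hTwordNil, ← grpOp_one (W := W) (F := F)]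
        exact mem_spanOf 1
      | cons i ω ih =>
        rw [hTwordCons]
        refine mul_mem_spanOf_of_gen (fun q g => ?_) ih
        rw [TOp_mul_grp_gen]
        exact add_mem_spanOf (single_mem_spanOf _ _) (single_mem_spanOf _ _)
    have hTwmem : ∀ w : W, Tw w ∈ SpanOf (grpOp (W := W) (F := F)) := by
      intro w
      obtain ⟨ω, hω, rfl⟩ := cs.exists_reduced_word' w
      rw [hTw ω hω]
      exact hTwordmem ω
    have hP0' : ∀ φ, Pair 0 φ = 0 := by
      intro φ
      have h := hPadd 0 0 φ
      rw [add_zero] at h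
      exact left_eq_add.mp h
    have hDP0 : ∀ φ χ, DP 0 φ χ = 0 := by
      intro φ χ
      have h := hDPadd 0 0 φ χ
      rw [add_zero] at h
      exact left_eq_add.mp h
    have hPsum : ∀ (t : Finset W) (f : W → Module.End ℤ F) (φ : W → F),
        Pair (∑ w ∈ t, f w) φ = ∑ w ∈ t, Pair (f w) φ := by
      intro t f φ
      induction t using Finset.induction_on with
      | empty => simpa using hP0' φ
      | insert _ _ h ih =>
        rw [Finset.sum_insert h, Finset.sum_insert h, hPadd, ih]
    have hDPsum : ∀ (t : Finset W) (f : W → Module.End ℤ F) (φ χ : W → F),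
        DP (∑ w ∈ t, f w) φ χ = ∑ w ∈ t, DP (f w) φ χ := by
      intro t f φ χ
      induction t using Finset.induction_on with
      | empty => simpa using hDP0 φ χ
      | insert _ _ h ih =>
        rw [Finset.sum_insert h, Finset.sum_insert h, hDPadd, ih]
    have key : ∀ z ∈ SpanOf (grpOp (W := W) (F := F)), ∀ φ χ : W → F,
        Pair z (fun w => φ w * χ w) = DP z φ χ := by
      rintro z ⟨t, q, rfl⟩ φ χ
      rw [hPsum, hDPsum]
      refine Finset.sum_congr rfl fun g _ => ?_
      rw [hPmul, hDPmul, hPgrp, hDPgrp]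
    constructor
    · rintro x ⟨d, hd, rfl⟩ φ χ _ _
      exact key _ (sum_mem_spanOf _ _ fun w _ => mulOp_mul_mem_spanOf _ (hTwmem w)) φ χ
    · intro u v x
      obtain ⟨t, q0, hq0⟩ := hgrpmem x
      set q : W → F := fun w => if w ∈ t then q0 w else 0 with hqdef
      have hq : grpOp x = ∑ w ∈ t, mulOp (q w) * Tw w := by
        rw [hq0]
        exact Finset.sum_congr rfl fun w hw => by rw [hqdef]; simp [hw]
      have hψx : ∀ w', ψ w' x = q w' := by
        intro w'
        have e := hPgrp x (ψ w')
        rw [hq, hPsum] at e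
        simp only [hPmul, hψ, mul_ite, mul_one, mul_zero] at e
        rw [Finset.sum_ite_eq] at e
        by_cases hw' : w' ∈ t
        · rw [if_pos hw'] at e
          exact e.symm
        · rw [if_neg hw'] at e
          rw [← e, hqdef]
          simp [hw']
      have hcval : ∀ w, DP (Tw w) (ψ u) (ψ v) = c w u v := by
        intro w
        rw [hc]
        have hz : ∀ p : W × W, p ≠ (u, v) →
            c w p.1 p.2 * Pair (Tw p.1) (ψ u) * Pair (Tw p.2) (ψ v) = 0 := by
          intro p hp
          by_cases h1 : p.1 = u
          · have h2 : p.2 ≠ v := by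
              intro h2
              exact hp (by cases p; simp_all)
            rw [hψ v p.2, if_neg (fun e => h2 e.symm), mul_zero]
          · rw [hψ u p.1, if_neg (fun e => h1 e.symm), mul_zero, zero_mul]
        rw [finsum_eq_single _ (u, v) hz]
        rw [hψ u u, hψ v v, if_pos rfl, if_pos rfl, mul_one, mul_one]
      have lhs : ψ u x * ψ v x = ∑ w ∈ t, q w * c w u v := by
        rw [← hDPgrp x (ψ u) (ψ v), hq, hDPsum]
        exact Finset.sum_congr rfl fun w _ => by rw [hDPmul, hcval]
      have hsupp : (Function.support fun w => c w u v * ψ w x) ⊆ ↑t := by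
        intro w hw
        simp only [Function.mem_support] at hw
        by_contra hwt
        apply hw
        rw [hψx w, hqdef]
        simp only [Finset.mem_coe] at hwt
        simp [hwt]
      rw [finsum_eq_finset_sum_of_support_subset _ hsupp, lhs]
      exact Finset.sum_congr rfl fun w _ => by rw [hψx w]; ring


end
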